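/- Let R ≥ 2 and let a ≥ 3 be an odd integer. Let λ_1, …, λ_R be positive and pairwise distinct reals, and fix k ∈ {1,…,R}. Suppose v : [0,∞) → ℝ^R is a solution of the loading dynamics dv_i/dt = λ_i v_i^a − v_i ∑_{j=1}^R λ_j v_j^{a+1} whose initial condition satisfies v_k(0) ≠ 0 and, for every i ≠ k, λ_i^{1/(a−1)} |v_i(0)| < λ_k^{1/(a−1)} |v_k(0)|. Then v(t) converges as t → ∞ to e_k if v_k(0) > 0, and to −e_k if v_k(0) < 0. -/

import Mathlib

set_option maxHeartbeats 1000000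
open Filter Topology Set

/-- linear scalar ODE exp formula on [0,∞) -/
lemma expFormulaAux {x f : ℝ → ℝ} (hf : Continuous f)
    (hx : ∀ t ≥ (0:ℝ), HasDerivAt x (f t * x t) t) :
    ∀ t ≥ (0:ℝ), x t = x 0 * Real.exp (∫ s in (0:ℝ)..t, f s) := by
  intro t ht
  set F : ℝ → ℝ := fun u => ∫ s in (0:ℝ)..u, f s with hFdef
  have hFd : ∀ u : ℝ, HasDerivAt F (f u) u := fun u =>
    (hf.integral_hasStrictDerivAt 0 u).hasDerivAt
  have key : ∀ u ∈ Set.Icc (0:ℝ) t, x u * Real.exp (-F u) = x 0 * Real.exp (-F 0) := by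
    apply constant_of_has_deriv_right_zero
    · intro u hu
      exact ((hx u hu.1).continuousAt.mul (((hFd u).neg).exp.continuousAt)).continuousWithinAt
    · intro u hu
      have h1 : HasDerivAt (fun w => x w * Real.exp (-F w))
          (f u * x u * Real.exp (-F u) + x u * (Real.exp (-F u) * -f u)) u :=
        (hx u hu.1).mul ((hFd u).neg).exp
      have h0 : f u * x u * Real.exp (-F u) + x u * (Real.exp (-F u) * -f u) = 0 := by ring
      rw [h0] at h1
      exact h1.hasDerivWithinAt
  have hF0 : F 0 = 0 := intervalIntegral.integral_same
  have := key t ⟨le_refl 0 |>.trans ht, le_refl t⟩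
  rw [hF0] at this
  simp only [neg_zero, Real.exp_zero, mul_one] at this
  have hpos := Real.exp_pos (F t)
  have hne : Real.exp (-F t) = (Real.exp (F t))⁻¹ := Real.exp_neg _
  rw [hne] at this
  field_simp at this
  linarith [this]

lemma barrierAux {ψ d : ℝ → ℝ} (h0 : ψ 0 ≤ 0)
    (hd : ∀ t : ℝ, HasDerivAt ψ (d t) t)
    (hneg : ∀ t ≥ (0:ℝ), ψ t ≤ 0 → d t < 0) :
    ∀ t ≥ (0:ℝ), ψ t ≤ 0 := by
  intro t1 ht1
  by_contra hpos
  push_neg at hpos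
  have hψc : Continuous ψ := by
    rw [continuous_iff_continuousAt]; exact fun u => (hd u).continuousAt
  set B : Set ℝ := Icc 0 t1 ∩ ψ ⁻¹' Iic 0 with hBdef
  have hBne : (0:ℝ) ∈ B := ⟨⟨le_refl 0, ht1⟩, h0⟩
  have hBbdd : BddAbove B := ⟨t1, fun s hs => hs.1.2⟩
  have hBclosed : IsClosed B := isClosed_Icc.inter (isClosed_Iic.preimage hψc)
  set τ := sSup B with hτdef
  have hτB : τ ∈ B := hBclosed.csSup_mem ⟨0, hBne⟩ hBbdd
  have hτ0 : 0 ≤ τ := hτB.1.1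
  have hτψ : ψ τ ≤ 0 := hτB.2
  have hτlt : τ < t1 := lt_of_le_of_ne hτB.1.2 (fun h => by rw [h] at hτψ; linarith)
  have hdτ : d τ < 0 := hneg τ hτ0 hτψ
  -- slope near τ from the right is < 0 eventually
  have hslope : Tendsto (slope ψ τ) (𝓝[≠] τ) (𝓝 (d τ)) :=
    hasDerivAt_iff_tendsto_slope.1 (hd τ)
  have hslope' : Tendsto (slope ψ τ) (𝓝[>] τ) (𝓝 (d τ)) :=
    hslope.mono_left (nhdsWithin_mono τ (fun u hu => ne_of_gt hu))
  have hev : ∀ᶠ u in 𝓝[>] τ, slope ψ τ u < 0 :=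
    hslope'.eventually_lt_const hdτ
  have hev2 : ∀ᶠ u in 𝓝[>] τ, u < t1 := by
    have : Ioo τ t1 ∈ 𝓝[>] τ := Ioo_mem_nhdsGT_of_mem ⟨le_refl τ, hτlt⟩
    exact Filter.mem_of_superset this (fun u hu => hu.2)
  obtain ⟨u, hu1, hu2, hu3⟩ := (hev.and (hev2.and self_mem_nhdsWithin)).exists
  -- hu3 : u ∈ Ioi τ
  have huτ : τ < u := hu3
  have : ψ u < ψ τ := by
    have := hu1
    rw [slope_def_field] at this
    have hpos' : 0 < u - τ := by linarith
    have := mul_neg_of_neg_of_pos this hpos'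
    rw [div_mul_cancel₀] at this
    · linarith
    · exact ne_of_gt hpos'
  have huB : u ∈ B := ⟨⟨le_trans hτ0 (le_of_lt huτ), le_of_lt hu2⟩, by
    simp only [Set.mem_preimage, Set.mem_Iic]; linarith⟩
  have : u ≤ τ := le_csSup hBbdd huB
  linarith

lemma decayAux {ψ d : ℝ → ℝ} {δ : ℝ}
    (hd : ∀ t : ℝ, HasDerivAt ψ (d t) t)
    (hle : ∀ t ≥ (0:ℝ), d t ≤ -δ) :
    ∀ t ≥ (0:ℝ), ψ t ≤ ψ 0 - δ * t := by
  have hg : ∀ u : ℝ, HasDerivAt (fun w => ψ w + δ * w) (d u + δ) u := by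
    intro u
    have h2 : HasDerivAt (fun w : ℝ => δ * w) (δ * 1) u := (hasDerivAt_id u).const_mul δ
    rw [mul_one] at h2
    exact (hd u).add h2
  have hanti : AntitoneOn (fun w => ψ w + δ * w) (Ici (0:ℝ)) := by
    apply antitoneOn_of_deriv_nonpos (convex_Ici 0)
    · exact (Continuous.continuousOn (by
        rw [continuous_iff_continuousAt]; exact fun u => (hg u).continuousAt))
    · intro u hu
      exact (hg u).differentiableAt.differentiableWithinAt
    · intro u hu
      rw [interior_Ici] at hu
      rw [(hg u).deriv]
      have := hle u (le_of_lt hu)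
      linarith
  intro t ht
  have := hanti (self_mem_Ici) ht ht
  simp only [mul_zero, add_zero] at this
  linarith

theorem stmt0 (R : ℕ) (hR : 2 ≤ R) (a : ℕ) (ha : 3 ≤ a) (haodd : Odd a)
    (lam : Fin R → ℝ) (hpos : ∀ i, 0 < lam i)
    (hdist : ∀ i j : Fin R, i ≠ j → lam i ≠ lam j)
    (k : Fin R) (v : ℝ → Fin R → ℝ)
    (hode : ∀ t ≥ (0 : ℝ), ∀ i,
      HasDerivAt (fun s => v s i)
        (lam i * (v t i) ^ a - v t i * ∑ j, lam j * (v t j) ^ (a + 1)) t)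
    (hk0 : v 0 k ≠ 0)
    (hbasin : ∀ i, i ≠ k →
      lam i ^ (((a : ℝ) - 1)⁻¹) * |v 0 i| < lam k ^ (((a : ℝ) - 1)⁻¹) * |v 0 k|) :
    (0 < v 0 k → Tendsto v atTop (𝓝 (Pi.single k 1))) ∧
    (v 0 k < 0 → Tendsto v atTop (𝓝 (-Pi.single k 1))) := by
  classical
  obtain ⟨m, hm⟩ := haodd
  have hm1 : 1 ≤ m := by omega
  have haR : (a:ℝ) = 2*(m:ℝ)+1 := by exact_mod_cast congrArg (Nat.cast : ℕ → ℝ) hm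
  -- the constants c i
  set c : Fin R → ℝ := fun i => lam i ^ (((a : ℝ) - 1)⁻¹) with hcdef
  have hcpos : ∀ i, 0 < c i := fun i => Real.rpow_pos_of_pos (hpos i) _
  have ha3 : (3:ℝ) ≤ (a:ℝ) := by exact_mod_cast ha
  have hcpow : ∀ i, (c i) ^ (2*m) = lam i := by
    intro i
    have h2m : ((2*m : ℕ) : ℝ) = (a:ℝ) - 1 := by push_cast; linarith
    rw [hcdef]
    rw [← Real.rpow_natCast (lam i ^ (((a : ℝ) - 1)⁻¹)) (2*m),
        ← Real.rpow_mul (hpos i).le, h2m, inv_mul_cancel₀ (by linarith : (a:ℝ) - 1 ≠ 0),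
        Real.rpow_one]
  -- clamped solution and continuity
  set V : Fin R → ℝ → ℝ := fun i t => v (max t 0) i with hVdef
  have hVeq : ∀ t ≥ (0:ℝ), ∀ i, V i t = v t i := by
    intro t ht i; simp only [hVdef, max_eq_left ht]
  have hVcont : ∀ i, Continuous (V i) := by
    intro i
    rw [continuous_iff_continuousAt]
    intro t
    have h1 : ContinuousAt (fun s => v s i) (max t 0) :=
      (hode (max t 0) (le_max_right _ _) i).continuousAt
    have hg : ContinuousAt (fun s : ℝ => max s 0) t :=
      (continuous_id.max continuous_const).continuousAt
    exact ContinuousAt.comp (g := fun s => v s i) (f := fun s : ℝ => max s 0) h1 hg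
  set S : ℝ → ℝ := fun t => ∑ j, lam j * (V j t) ^ (a+1) with hSdef
  have hScont : Continuous S := by
    apply continuous_finset_sum
    intro j _
    exact continuous_const.mul ((hVcont j).pow _)
  set f : Fin R → ℝ → ℝ := fun i t => lam i * (V i t) ^ (a-1) - S t with hfdef
  have hfcont : ∀ i, Continuous (f i) := fun i =>
    (continuous_const.mul ((hVcont i).pow _)).sub hScont
  have hSv : ∀ t ≥ (0:ℝ), S t = ∑ j, lam j * (v t j) ^ (a+1) := by
    intro t ht
    apply Finset.sum_congr rfl
    intro j _
    rw [hVeq t ht]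
  have hpowsucc : ∀ x : ℝ, x ^ a = x ^ (a-1) * x := by
    intro x
    rw [← pow_succ]
    congr 1
    omega
  -- the ODE in linear form
  have hode' : ∀ t ≥ (0:ℝ), ∀ i, HasDerivAt (fun s => v s i) (f i t * v t i) t := by
    intro t ht i
    have h1 := hode t ht i
    have h2 : lam i * (v t i) ^ a - v t i * ∑ j, lam j * (v t j) ^ (a + 1)
        = f i t * v t i := by
      rw [hfdef]
      simp only
      rw [hSv t ht, hVeq t ht, hpowsucc (v t i)]
      ring
    rwa [h2] at h1
  -- exp formula for each coordinate
  set F : Fin R → ℝ → ℝ := fun i t => ∫ s in (0:ℝ)..t, f i s with hFdef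
  have hFd : ∀ i, ∀ t : ℝ, HasDerivAt (F i) (f i t) t := fun i t =>
    ((hfcont i).integral_hasStrictDerivAt 0 t).hasDerivAt
  have hF0 : ∀ i, F i 0 = 0 := fun i => intervalIntegral.integral_same
  have hv : ∀ t ≥ (0:ℝ), ∀ i, v t i = v 0 i * Real.exp (F i t) :=
    fun t ht i => expFormulaAux (hfcont i) (fun u hu => hode' u hu i) t ht
  -- the squared weighted coordinates
  set W : Fin R → ℝ → ℝ := fun i t => (c i * v t i) ^ 2 with hWdef
  have hWnonneg : ∀ i t, 0 ≤ W i t := fun i t => sq_nonneg _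
  have hWexp : ∀ t ≥ (0:ℝ), ∀ i, W i t = W i 0 * Real.exp (2 * F i t) := by
    intro t ht i
    simp only [hWdef]
    rw [hv t ht i, two_mul, Real.exp_add]
    ring
  have hvk_ne : ∀ t ≥ (0:ℝ), v t k ≠ 0 := by
    intro t ht
    rw [hv t ht k]
    exact mul_ne_zero hk0 (Real.exp_ne_zero _)
  have hWk_pos : ∀ t ≥ (0:ℝ), 0 < W k t := by
    intro t ht
    exact sq_pos_of_ne_zero (mul_ne_zero (hcpos k).ne' (hvk_ne t ht))
  -- P = W^m identity
  have hPW : ∀ t : ℝ, ∀ i, lam i * (v t i) ^ (a-1) = (W i t) ^ m := by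
    intro t i
    simp only [hWdef]
    rw [← pow_mul, mul_pow, ← hcpow i]
    rw [show (2*m) = (a-1) by omega]
  -- basin condition in terms of W at time 0
  have hW0 : ∀ i, i ≠ k → W i 0 < W k 0 := by
    intro i hik
    have h1 := hbasin i hik
    have h2 : c i * |v 0 i| < c k * |v 0 k| := h1
    have h3 : |c i * v 0 i| < |c k * v 0 k| := by
      rw [abs_mul, abs_mul, abs_of_pos (hcpos i), abs_of_pos (hcpos k)]
      exact h2
    simp only [hWdef]
    rw [← sq_abs (c i * v 0 i), ← sq_abs (c k * v 0 k)]
    have h4 : (0:ℝ) ≤ |c i * v 0 i| := abs_nonneg _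
    nlinarith
  -- invariance of the basin, with ratio bound
  have hinv : ∀ i, i ≠ k → ∀ t ≥ (0:ℝ), W i t ≤ (W i 0 / W k 0) * W k t := by
    intro i hik
    set r : ℝ := W i 0 / W k 0 with hrdef
    have hWk0 : 0 < W k 0 := hWk_pos 0 le_rfl
    have hr1 : r < 1 := (div_lt_one hWk0).2 (hW0 i hik)
    have hr0 : 0 ≤ r := div_nonneg (hWnonneg i 0) hWk0.le
    have hrW : W i 0 = r * W k 0 := by
      rw [hrdef, div_mul_cancel₀]
      exact hWk0.ne'
    -- if ψ := F i - F k ≤ 0 then W i t ≤ r * W k t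
    have hkey : ∀ t ≥ (0:ℝ), F i t - F k t ≤ 0 → W i t ≤ r * W k t := by
      intro t ht hψ
      rw [hWexp t ht i, hWexp t ht k, hrW]
      have hexp : Real.exp (2 * F i t) ≤ Real.exp (2 * F k t) :=
        Real.exp_le_exp.2 (by linarith)
      have := mul_le_mul_of_nonneg_left hexp (by positivity : (0:ℝ) ≤ r * W k 0)
      calc r * W k 0 * Real.exp (2 * F i t) ≤ r * W k 0 * Real.exp (2 * F k t) := this
        _ = r * (W k 0 * Real.exp (2 * F k t)) := by ring
    have hψle : ∀ t ≥ (0:ℝ), F i t - F k t ≤ 0 := by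
      apply barrierAux (d := fun t => f i t - f k t)
      · rw [hF0 i, hF0 k]; norm_num
      · exact fun t => (hFd i t).sub (hFd k t)
      · intro t ht hψ
        have hWi : W i t ≤ r * W k t := hkey t ht hψ
        have hWik : W i t < W k t := by nlinarith [hWk_pos t ht]
        have hd : f i t - f k t = (W i t) ^ m - (W k t) ^ m := by
          simp only [hfdef]
          rw [hVeq t ht i, hVeq t ht k, hPW t i, hPW t k]
          ring
        rw [hd, sub_neg]
        exact pow_lt_pow_left₀ hWik (hWnonneg i t) (by omega)
    intro t ht
    exact hkey t ht (hψle t ht)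
  -- squared norm dynamics
  set n : ℝ → ℝ := fun t => ∑ j, (v t j) ^ 2 with hndef
  have hnd : ∀ t ≥ (0:ℝ), HasDerivAt (fun s => n s - 1) ((-2 * S t) * (n t - 1)) t := by
    intro t ht
    have h1 : ∀ j : Fin R, HasDerivAt (fun s => (v s j) ^ 2)
        (2 * (v t j) * (lam j * (v t j) ^ a - v t j * ∑ l, lam l * (v t l) ^ (a + 1))) t := by
      intro j
      have h2 := (hode t ht j).fun_pow 2
      simpa using h2.congr_deriv (by ring)
    have h3 : HasDerivAt (fun s => ∑ j, (v s j) ^ 2)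
        (∑ j, 2 * (v t j) * (lam j * (v t j) ^ a - v t j * ∑ l, lam l * (v t l) ^ (a + 1))) t :=
      HasDerivAt.fun_sum (fun j _ => h1 j)
    have h4 : (∑ j, 2 * (v t j) * (lam j * (v t j) ^ a - v t j * ∑ l, lam l * (v t l) ^ (a + 1)))
        = (-2 * S t) * (n t - 1) := by
      have e1 : ∀ j : Fin R, 2 * (v t j) * (lam j * (v t j) ^ a - v t j * ∑ l, lam l * (v t l) ^ (a + 1))
          = 2 * (lam j * (v t j) ^ (a+1)) - (2 * ∑ l, lam l * (v t l) ^ (a + 1)) * (v t j) ^ 2 := by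
        intro j
        have h5 : (v t j) * (v t j) ^ a = (v t j) ^ (a+1) := by rw [← pow_succ']
        linear_combination (2 * lam j) * h5
      rw [Finset.sum_congr rfl (fun j _ => e1 j), Finset.sum_sub_distrib,
          ← Finset.mul_sum, ← Finset.mul_sum, hSv t ht, hndef]
      ring
    rw [h4] at h3
    exact h3.sub_const 1
  have hnexp : ∀ t ≥ (0:ℝ), n t - 1 = (n 0 - 1) * Real.exp (∫ s in (0:ℝ)..t, (-2) * S s) := by
    have := expFormulaAux (x := fun s => n s - 1) (f := fun s => (-2) * S s)
      (continuous_const.mul hScont) (fun t ht => by simpa using hnd t ht)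
    intro t ht
    simpa using this t ht
  have hSnonneg : ∀ t : ℝ, 0 ≤ S t := by
    intro t
    apply Finset.sum_nonneg
    intro j _
    have : Even (a+1) := by rw [hm]; exact ⟨m+1, by ring⟩
    exact mul_nonneg (hpos j).le (this.pow_nonneg _)
  have hIS : ∀ t ≥ (0:ℝ), 0 ≤ ∫ s in (0:ℝ)..t, S s := fun t ht =>
    intervalIntegral.integral_nonneg ht (fun u _ => hSnonneg u)
  have hE : ∀ t ≥ (0:ℝ), Real.exp (∫ s in (0:ℝ)..t, (-2) * S s) ≤ 1 := by
    intro t ht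
    rw [Real.exp_le_one_iff]
    rw [intervalIntegral.integral_const_mul]
    have := hIS t ht
    nlinarith
  have hn0pos : 0 < n 0 := by
    have h1 : (v 0 k) ^ 2 ≤ n 0 :=
      Finset.single_le_sum (f := fun j => (v 0 j) ^ 2) (fun j _ => sq_nonneg _) (Finset.mem_univ k)
    nlinarith [sq_pos_of_ne_zero hk0]
  have hnub : ∀ t ≥ (0:ℝ), n t ≤ max (n 0) 1 := by
    intro t ht
    have h1 := hnexp t ht
    have h2 := hE t ht
    have h3 := Real.exp_pos (∫ s in (0:ℝ)..t, (-2) * S s)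
    rcases le_or_gt (n 0) 1 with h | h
    · have : n t - 1 ≤ 0 := by nlinarith
      have := le_max_right (n 0) 1
      linarith
    · have : n t - 1 ≤ n 0 - 1 := by nlinarith
      have := le_max_left (n 0) 1
      linarith
  have hnlb : ∀ t ≥ (0:ℝ), min (n 0) 1 ≤ n t := by
    intro t ht
    have h1 := hnexp t ht
    have h2 := hE t ht
    have h3 := Real.exp_pos (∫ s in (0:ℝ)..t, (-2) * S s)
    rcases le_or_gt (n 0) 1 with h | h
    · have : n 0 - 1 ≤ n t - 1 := by nlinarith
      have := min_le_left (n 0) 1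
      linarith
    · have : (0:ℝ) ≤ n t - 1 := by nlinarith
      have := min_le_right (n 0) 1
      linarith
  -- lower bound for W k
  set nmin : ℝ := min (n 0) 1 with hnmindef
  have hnmin_pos : 0 < nmin := lt_min hn0pos one_pos
  set D : ℝ := ∑ j, ((c j)⁻¹) ^ 2 with hDdef
  have hDpos : 0 < D := by
    apply Finset.sum_pos
    · intro j _
      have := hcpos j
      positivity
    · exact ⟨k, Finset.mem_univ k⟩
  have hWj_le : ∀ t ≥ (0:ℝ), ∀ j, W j t ≤ W k t := by
    intro t ht j
    by_cases hj : j = k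
    · rw [hj]
    · have h1 := hinv j hj t ht
      have hWk0 : 0 < W k 0 := hWk_pos 0 le_rfl
      have hr1 : W j 0 / W k 0 < 1 := (div_lt_one hWk0).2 (hW0 j hj)
      have hr0 : 0 ≤ W j 0 / W k 0 := div_nonneg (hWnonneg j 0) hWk0.le
      nlinarith [hWk_pos t ht]
  have hv2W : ∀ t : ℝ, ∀ j, (v t j) ^ 2 = W j t * ((c j)⁻¹) ^ 2 := by
    intro t j
    simp only [hWdef]
    rw [mul_pow, inv_pow, mul_comm ((c j)^2) ((v t j)^2), mul_assoc,
        mul_inv_cancel₀ (pow_ne_zero _ (hcpos j).ne'), mul_one]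
  have hWk_lb : ∀ t ≥ (0:ℝ), nmin / D ≤ W k t := by
    intro t ht
    have h1 : n t ≤ W k t * D := by
      rw [hndef, hDdef]
      simp only
      rw [Finset.mul_sum]
      apply Finset.sum_le_sum
      intro j _
      rw [hv2W t j]
      exact mul_le_mul_of_nonneg_right (hWj_le t ht j) (by positivity)
    have h2 := hnlb t ht
    rw [div_le_iff₀ hDpos]
    calc nmin ≤ n t := h2
      _ ≤ W k t * D := h1
  set wmin : ℝ := nmin / D with hwmindef
  have hwmin_pos : 0 < wmin := div_pos hnmin_pos hDpos
  have hWk_ub : ∀ t ≥ (0:ℝ), W k t ≤ (c k) ^ 2 * max (n 0) 1 := by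
    intro t ht
    have h1 : (v t k) ^ 2 ≤ n t :=
      Finset.single_le_sum (f := fun j => (v t j) ^ 2) (fun j _ => sq_nonneg _) (Finset.mem_univ k)
    have h2 := hnub t ht
    simp only [hWdef]
    rw [mul_pow]
    exact mul_le_mul_of_nonneg_left (h1.trans h2) (sq_nonneg _)
  -- lower bound on S
  set s0 : ℝ := wmin ^ m * (wmin * ((c k)⁻¹) ^ 2) with hs0def
  have hs0pos : 0 < s0 := by
    have h1 : 0 < wmin ^ m := pow_pos hwmin_pos m
    have h2 := hcpos k
    positivity
  have hSlb : ∀ t ≥ (0:ℝ), s0 ≤ S t := by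
    intro t ht
    have h0 : S t = ∑ j, lam j * (v t j) ^ (a+1) := hSv t ht
    have h1 : lam k * (v t k) ^ (a+1) ≤ S t := by
      rw [h0]
      apply Finset.single_le_sum (f := fun j => lam j * (v t j) ^ (a+1))
        (fun j _ => mul_nonneg (hpos j).le (by
          have : Even (a+1) := by rw [hm]; exact ⟨m+1, by ring⟩
          exact this.pow_nonneg _)) (Finset.mem_univ k)
    have h2 : lam k * (v t k) ^ (a+1) = (W k t) ^ m * ((v t k) ^ 2) := by
      have : (v t k) ^ (a+1) = (v t k) ^ (a-1) * (v t k) ^ 2 := by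
        rw [← pow_add]
        congr 1
        omega
      rw [this, ← mul_assoc, hPW t k]
    have h3 : (v t k) ^ 2 = W k t * ((c k)⁻¹) ^ 2 := hv2W t k
    have h4 : wmin ≤ W k t := hWk_lb t ht
    have h5 : wmin ^ m ≤ (W k t) ^ m := pow_le_pow_left₀ hwmin_pos.le h4 m
    have h6 : s0 ≤ (W k t) ^ m * ((v t k) ^ 2) := by
      rw [h3, hs0def]
      have : wmin * ((c k)⁻¹)^2 ≤ W k t * ((c k)⁻¹)^2 :=
        mul_le_mul_of_nonneg_right h4 (by positivity)
      calc wmin ^ m * (wmin * ((c k)⁻¹) ^ 2) ≤ (W k t) ^ m * (wmin * ((c k)⁻¹) ^ 2) :=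
            mul_le_mul_of_nonneg_right h5 (by positivity)
        _ ≤ (W k t) ^ m * (W k t * ((c k)⁻¹) ^ 2) :=
            mul_le_mul_of_nonneg_left this (by positivity)
    linarith [h2 ▸ h6, h1]
  -- integral lower bound and convergence of n to 1
  have hISlb : ∀ t ≥ (0:ℝ), s0 * t ≤ ∫ s in (0:ℝ)..t, S s := by
    intro t ht
    have h1 : (∫ s in (0:ℝ)..t, (s0 : ℝ)) ≤ ∫ s in (0:ℝ)..t, S s := by
      apply intervalIntegral.integral_mono_on ht
      · exact intervalIntegrable_const
      · exact hScont.intervalIntegrable 0 t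
      · exact fun u hu => hSlb u hu.1
    rw [intervalIntegral.integral_const, smul_eq_mul, sub_zero, mul_comm] at h1
    exact h1
  have hn1 : Tendsto n atTop (𝓝 1) := by
    have hb : Tendsto (fun t : ℝ => |n 0 - 1| * Real.exp (-(2 * s0 * t))) atTop (𝓝 0) := by
      have h1 : Tendsto (fun t : ℝ => 2 * s0 * t) atTop atTop :=
        Tendsto.const_mul_atTop (by positivity) tendsto_id
      have h2 : Tendsto (fun t : ℝ => Real.exp (-(2 * s0 * t))) atTop (𝓝 0) :=
        Real.tendsto_exp_neg_atTop_nhds_zero.comp h1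
      simpa using h2.const_mul |n 0 - 1|
    have hub : ∀ᶠ t in (atTop : Filter ℝ), n t - 1 ≤ |n 0 - 1| * Real.exp (-(2 * s0 * t)) := by
      filter_upwards [eventually_ge_atTop (0:ℝ)] with t ht
      have h1 := hnexp t ht
      have h2 : (∫ s in (0:ℝ)..t, (-2) * S s) = -(2 * ∫ s in (0:ℝ)..t, S s) := by
        rw [intervalIntegral.integral_const_mul]; ring
      have h3 : Real.exp (∫ s in (0:ℝ)..t, (-2) * S s) ≤ Real.exp (-(2 * s0 * t)) := by
        rw [h2, Real.exp_le_exp]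
        have := hISlb t ht
        nlinarith
      have h4 : n t - 1 ≤ |n 0 - 1| * Real.exp (∫ s in (0:ℝ)..t, (-2) * S s) := by
        rw [h1]
        have := Real.exp_pos (∫ s in (0:ℝ)..t, (-2) * S s)
        nlinarith [le_abs_self (n 0 - 1)]
      calc n t - 1 ≤ |n 0 - 1| * Real.exp (∫ s in (0:ℝ)..t, (-2) * S s) := h4
        _ ≤ |n 0 - 1| * Real.exp (-(2 * s0 * t)) :=
            mul_le_mul_of_nonneg_left h3 (abs_nonneg _)
    have hlb : ∀ᶠ t in (atTop : Filter ℝ), -(|n 0 - 1| * Real.exp (-(2 * s0 * t))) ≤ n t - 1 := by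
      filter_upwards [eventually_ge_atTop (0:ℝ)] with t ht
      have h1 := hnexp t ht
      have h2 : (∫ s in (0:ℝ)..t, (-2) * S s) = -(2 * ∫ s in (0:ℝ)..t, S s) := by
        rw [intervalIntegral.integral_const_mul]; ring
      have h3 : Real.exp (∫ s in (0:ℝ)..t, (-2) * S s) ≤ Real.exp (-(2 * s0 * t)) := by
        rw [h2, Real.exp_le_exp]
        have := hISlb t ht
        nlinarith
      have h5 := Real.exp_pos (∫ s in (0:ℝ)..t, (-2) * S s)
      have h6 := Real.exp_pos (-(2 * s0 * t))
      rw [h1]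
      nlinarith [neg_abs_le (n 0 - 1), abs_nonneg (n 0 - 1)]
    have h7 : Tendsto (fun t => n t - 1) atTop (𝓝 0) :=
      tendsto_of_tendsto_of_tendsto_of_le_of_le' (by simpa using hb.neg) hb hlb hub
    have := h7.add_const 1
    simpa using this
  -- decay of non-principal coordinates
  have hdecay2 : ∀ i, i ≠ k → Tendsto (fun t => (v t i) ^ 2) atTop (𝓝 0) := by
    intro i hik
    set r : ℝ := W i 0 / W k 0 with hrdef
    have hWk0 : 0 < W k 0 := hWk_pos 0 le_rfl
    have hr1 : r < 1 := (div_lt_one hWk0).2 (hW0 i hik)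
    have hr0 : 0 ≤ r := div_nonneg (hWnonneg i 0) hWk0.le
    have hrW : W i 0 = r * W k 0 := by
      rw [hrdef, div_mul_cancel₀]
      exact hWk0.ne'
    have hrm : r ^ m < 1 := pow_lt_one₀ hr0 hr1 (by omega)
    set δ : ℝ := (1 - r ^ m) * wmin ^ m with hδdef
    have hδpos : 0 < δ := by
      have := pow_pos hwmin_pos m
      nlinarith
    have hψd : ∀ t : ℝ, HasDerivAt (fun u => F i u - F k u) (f i t - f k t) t :=
      fun t => (hFd i t).sub (hFd k t)
    have hdle : ∀ t ≥ (0:ℝ), f i t - f k t ≤ -δ := by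
      intro t ht
      have hWi := hinv i hik t ht
      have h2 : (W i t) ^ m ≤ r ^ m * (W k t) ^ m := by
        calc (W i t) ^ m ≤ (r * W k t) ^ m := pow_le_pow_left₀ (hWnonneg i t) hWi m
          _ = r ^ m * (W k t) ^ m := mul_pow r (W k t) m
      have h3 : wmin ^ m ≤ (W k t) ^ m := pow_le_pow_left₀ hwmin_pos.le (hWk_lb t ht) m
      have hd : f i t - f k t = (W i t) ^ m - (W k t) ^ m := by
        simp only [hfdef]
        rw [hVeq t ht i, hVeq t ht k, hPW t i, hPW t k]
        ring
      rw [hd, hδdef]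
      nlinarith [pow_nonneg (hWnonneg k t) m, pow_pos hwmin_pos m]
    have hψ := decayAux hψd hdle
    have hψ0 : F i 0 - F k 0 = 0 := by rw [hF0 i, hF0 k]; ring
    -- bound on W i t
    set wmax : ℝ := (c k) ^ 2 * max (n 0) 1 with hwmaxdef
    have hwmax0 : 0 ≤ wmax := by
      have h1 : (0:ℝ) < max (n 0) 1 := lt_max_of_lt_right one_pos
      positivity
    have hWit : ∀ t ≥ (0:ℝ), W i t ≤ (r * wmax) * Real.exp (-(2 * δ) * t) := by
      intro t ht
      have he : Real.exp (2 * F k t) * Real.exp (2 * (F i t - F k t))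
          = Real.exp (2 * F i t) := by
        rw [← Real.exp_add]
        congr 1
        ring
      have h1 : W i t = r * W k t * Real.exp (2 * (F i t - F k t)) := by
        rw [hWexp t ht i, hWexp t ht k, hrW, ← he]
        ring
      have h2 : F i t - F k t ≤ -δ * t := by
        have := hψ t ht
        rw [hψ0] at this
        linarith
      have h3 : Real.exp (2 * (F i t - F k t)) ≤ Real.exp (-(2 * δ) * t) :=
        Real.exp_le_exp.2 (by linarith)
      have h4 : r * W k t ≤ r * wmax :=
        mul_le_mul_of_nonneg_left (hWk_ub t ht) hr0
      have h5 : 0 ≤ r * W k t := mul_nonneg hr0 (hWnonneg k t)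
      rw [h1]
      exact mul_le_mul h4 h3 (Real.exp_pos _).le (mul_nonneg hr0 hwmax0)
    -- squeeze (v t i)^2 to 0
    have hb0 : Tendsto (fun t : ℝ => ((r * wmax) * ((c i)⁻¹) ^ 2) * Real.exp (-(2 * δ) * t))
        atTop (𝓝 0) := by
      have h1 : Tendsto (fun t : ℝ => 2 * δ * t) atTop atTop :=
        Tendsto.const_mul_atTop (by positivity) tendsto_id
      have h2 : Tendsto (fun t : ℝ => Real.exp (-(2 * δ * t))) atTop (𝓝 0) :=
        Real.tendsto_exp_neg_atTop_nhds_zero.comp h1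
      have h3 := h2.const_mul ((r * wmax) * ((c i)⁻¹) ^ 2)
      simpa [neg_mul, mul_assoc] using h3
    apply tendsto_of_tendsto_of_tendsto_of_le_of_le' tendsto_const_nhds hb0
    · exact Eventually.of_forall (fun t => sq_nonneg _)
    · filter_upwards [eventually_ge_atTop (0:ℝ)] with t ht
      rw [hv2W t i]
      calc W i t * ((c i)⁻¹) ^ 2
          ≤ ((r * wmax) * Real.exp (-(2 * δ) * t)) * ((c i)⁻¹) ^ 2 :=
            mul_le_mul_of_nonneg_right (hWit t ht) (by positivity)
        _ = ((r * wmax) * ((c i)⁻¹) ^ 2) * Real.exp (-(2 * δ) * t) := by ring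
  have hdecay : ∀ i, i ≠ k → Tendsto (fun t => v t i) atTop (𝓝 0) := by
    intro i hik
    rw [tendsto_zero_iff_abs_tendsto_zero]
    have h1 : Tendsto (fun t => Real.sqrt ((v t i) ^ 2)) atTop (𝓝 (Real.sqrt 0)) :=
      (Real.continuous_sqrt.tendsto 0).comp (hdecay2 i hik)
    rw [Real.sqrt_zero] at h1
    exact h1.congr (fun t => Real.sqrt_sq_eq_abs _)
  -- convergence of the k-th coordinate
  have hvk2 : Tendsto (fun t => (v t k) ^ 2) atTop (𝓝 1) := by
    have hsum : Tendsto (fun t => ∑ i ∈ Finset.univ.erase k, (v t i) ^ 2) atTop (𝓝 0) := by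
      have h1 : Tendsto (fun t => ∑ i ∈ Finset.univ.erase k, (v t i) ^ 2) atTop
          (𝓝 (∑ i ∈ Finset.univ.erase k, (0:ℝ))) := by
        apply tendsto_finset_sum
        intro i hi
        have h2 := hdecay2 i (Finset.ne_of_mem_erase hi)
        exact h2
      simpa using h1
    have hid : ∀ t : ℝ, (v t k) ^ 2 = n t - ∑ i ∈ Finset.univ.erase k, (v t i) ^ 2 := by
      intro t
      rw [hndef]
      simp only
      rw [← Finset.add_sum_erase _ _ (Finset.mem_univ k)]
      ring
    have h3 := hn1.sub hsum
    rw [show (1:ℝ) - 0 = 1 by ring] at h3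
    exact h3.congr (fun t => (hid t).symm)
  have hvkabs : Tendsto (fun t => |v t k|) atTop (𝓝 1) := by
    have h1 : Tendsto (fun t => Real.sqrt ((v t k) ^ 2)) atTop (𝓝 (Real.sqrt 1)) :=
      (Real.continuous_sqrt.tendsto 1).comp hvk2
    rw [Real.sqrt_one] at h1
    exact h1.congr (fun t => Real.sqrt_sq_eq_abs _)
  -- final assembly
  constructor
  · intro hk0pos
    have hsign : ∀ t ≥ (0:ℝ), |v t k| = v t k := by
      intro t ht
      apply abs_of_pos
      rw [hv t ht k]
      positivity
    have hvk : Tendsto (fun t => v t k) atTop (𝓝 1) := by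
      apply hvkabs.congr'
      filter_upwards [eventually_ge_atTop (0:ℝ)] with t ht
      exact hsign t ht
    rw [tendsto_pi_nhds]
    intro i
    by_cases hik : i = k
    · subst hik
      simpa [Pi.single_eq_same] using hvk
    · have h1 := hdecay i hik
      simpa [Pi.single_eq_of_ne hik] using h1
  · intro hk0neg
    have hsign : ∀ t ≥ (0:ℝ), |v t k| = -(v t k) := by
      intro t ht
      apply abs_of_neg
      rw [hv t ht k]
      have := Real.exp_pos (F k t)
      nlinarith
    have hvk : Tendsto (fun t => v t k) atTop (𝓝 (-1)) := by
      have h1 : Tendsto (fun t => -|v t k|) atTop (𝓝 (-1)) := hvkabs.neg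
      apply h1.congr'
      filter_upwards [eventually_ge_atTop (0:ℝ)] with t ht
      rw [hsign t ht, neg_neg]
    rw [tendsto_pi_nhds]
    intro i
    by_cases hik : i = k
    · subst hik
      simpa [Pi.single_eq_same] using hvk
    · have h1 := hdecay i hik
      simpa [Pi.single_eq_of_ne hik] using h1
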